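/- Let 𝓛 : ℝ^n → ℝ be differentiable with L-Lipschitz gradient (L-smooth), let P be a symmetric positive definite n×n matrix whose eigenvalues all lie in [μ, M] with 0 < μ ≤ M, let θ ∈ ℝ^n, and let p_R, p_D ∈ ℝ^n be nonzero vectors such that p := p_R + p_D = −P·∇𝓛(θ). Then for any learning rate 0 < η < 2/(L·M), the one-step loss reduction satisfies 𝓛(θ) − 𝓛(θ + η·p) ≥ C(η)·(‖p_R‖² + ‖p_D‖² + 2·‖p_R‖·‖p_D‖·S(p_R, p_D)), where C(η) = η/M − L·η²/2 > 0. In particular, the guaranteed loss reduction is strictly increasing in the intra-step cosine S(p_R, p_D). -/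

import Mathlib

open scoped RealInnerProductSpace

lemma descent_lemma {E : Type*} [NormedAddCommGroup E] [InnerProductSpace ℝ E] [CompleteSpace E]
    (f : E → ℝ) (L : ℝ) (hdiff : Differentiable ℝ f)
    (hlip : ∀ x y, ‖gradient f x - gradient f y‖ ≤ L * ‖x - y‖) (x v : E) :
    f (x + v) ≤ f x + ⟪gradient f x, v⟫ + L / 2 * ‖v‖ ^ 2 := by
  set g : ℝ → ℝ := fun t =>
    f (x + t • v) - t * ⟪gradient f x, v⟫ - t ^ 2 * (L / 2 * ‖v‖ ^ 2) with hg
  have hφ : ∀ t : ℝ, HasDerivAt (fun t : ℝ => f (x + t • v))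
      ⟪gradient f (x + t • v), v⟫ t := by
    intro t
    have h1 : HasDerivAt (fun t : ℝ => x + t • v) v t := by
      simpa using ((hasDerivAt_id t).smul_const v).const_add x
    have h2 := (hdiff (x + t • v)).hasGradientAt.hasFDerivAt
    have := h2.comp_hasDerivAt t h1
    exact this
  have hg' : ∀ t : ℝ, HasDerivAt g
      (⟪gradient f (x + t • v), v⟫ - ⟪gradient f x, v⟫ - t * (L * ‖v‖ ^ 2)) t := by
    intro t
    have h3 : HasDerivAt (fun t : ℝ => t * ⟪gradient f x, v⟫) ⟪gradient f x, v⟫ t := by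
      simpa using (hasDerivAt_id t).mul_const ⟪gradient f x, v⟫
    have h4 : HasDerivAt (fun t : ℝ => t ^ 2 * (L / 2 * ‖v‖ ^ 2))
        (2 * t * (L / 2 * ‖v‖ ^ 2)) t := by
      simpa using (hasDerivAt_pow 2 t).mul_const (L / 2 * ‖v‖ ^ 2)
    have := ((hφ t).sub h3).sub h4
    exact this.congr_deriv (by ring)
  have hcont : ContinuousOn g (Set.Icc (0:ℝ) 1) :=
    fun t _ => ((hg' t).differentiableAt.continuousAt).continuousWithinAt
  have hanti : AntitoneOn g (Set.Icc (0:ℝ) 1) := by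
    apply antitoneOn_of_deriv_nonpos (convex_Icc 0 1) hcont
    · intro t _
      exact ((hg' t).differentiableAt).differentiableWithinAt
    · intro t ht
      rw [interior_Icc] at ht
      rw [(hg' t).deriv]
      have h5 : ⟪gradient f (x + t • v) - gradient f x, v⟫ ≤ t * (L * ‖v‖ ^ 2) := by
        calc ⟪gradient f (x + t • v) - gradient f x, v⟫
            ≤ ‖gradient f (x + t • v) - gradient f x‖ * ‖v‖ := real_inner_le_norm _ _
          _ ≤ (L * ‖x + t • v - x‖) * ‖v‖ :=
              mul_le_mul_of_nonneg_right (hlip _ _) (norm_nonneg _)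
          _ = t * (L * ‖v‖ ^ 2) := by
              rw [show x + t • v - x = t • v by abel, norm_smul,
                Real.norm_eq_abs, abs_of_nonneg ht.1.le]
              ring
      rw [inner_sub_left] at h5
      linarith
  have h6 := hanti (Set.left_mem_Icc.2 zero_le_one) (Set.right_mem_Icc.2 zero_le_one)
    zero_le_one
  simp only [hg, zero_smul, one_smul, add_zero, zero_mul, sub_zero, one_mul, one_pow,
    zero_pow, OfNat.ofNat_ne_zero, ne_eq, not_false_iff] at h6
  linarith

theorem alignment_maximizes_descent
    {n : ℕ} (𝓛 : EuclideanSpace ℝ (Fin n) → ℝ) (L : ℝ) (hL : 0 < L)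
    (hdiff : Differentiable ℝ 𝓛)
    (hlip : ∀ x y, ‖gradient 𝓛 x - gradient 𝓛 y‖ ≤ L * ‖x - y‖)
    (P : Matrix (Fin n) (Fin n) ℝ) (hP : P.PosDef)
    (μ M : ℝ) (hμ : 0 < μ) (hμM : μ ≤ M)
    (hspec : ∀ v : EuclideanSpace ℝ (Fin n),
      μ * ‖v‖ ^ 2 ≤ ⟪v, Matrix.toEuclideanLin P v⟫ ∧
      ⟪v, Matrix.toEuclideanLin P v⟫ ≤ M * ‖v‖ ^ 2)
    (θ pR pD : EuclideanSpace ℝ (Fin n)) (hpR : pR ≠ 0) (hpD : pD ≠ 0)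
    (hsum : pR + pD = -(Matrix.toEuclideanLin P (gradient 𝓛 θ)))
    (η : ℝ) (hη : 0 < η) (hη2 : η < 2 / (L * M)) :
    0 < η / M - L * η ^ 2 / 2 ∧
    𝓛 θ - 𝓛 (θ + η • (pR + pD)) ≥
      (η / M - L * η ^ 2 / 2) *
        (‖pR‖ ^ 2 + ‖pD‖ ^ 2 +
          2 * ‖pR‖ * ‖pD‖ * (⟪pR, pD⟫ / (‖pR‖ * ‖pD‖))) := by
  have hM : 0 < M := lt_of_lt_of_le hμ hμM
  set T := Matrix.toEuclideanLin P with hT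
  set g := gradient 𝓛 θ with hgdef
  set q := T g with hq
  -- positivity of the constant
  have hLM : 0 < L * M := mul_pos hL hM
  have hη3 : η * (L * M) < 2 := (lt_div_iff₀ hLM).1 hη2
  have hC : 0 < η / M - L * η ^ 2 / 2 := by
    have h2 : 0 < η * (2 - η * (L * M)) := mul_pos hη (by linarith)
    have h3 : η / M - L * η ^ 2 / 2 = η * (2 - η * (L * M)) / (2 * M) := by
      field_simp
    rw [h3]; positivity
  refine ⟨hC, ?_⟩
  -- symmetry of T
  have hsym : ∀ x y : EuclideanSpace ℝ (Fin n), ⟪T x, y⟫ = ⟪x, T y⟫ :=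
    Matrix.isHermitian_iff_isSymmetric.mp hP.isHermitian
  -- key spectral bound : ‖q‖ ^ 2 ≤ M * ⟪g, q⟫
  set a := ⟪g, q⟫ with ha
  set b := ‖q‖ ^ 2 with hb
  set c := ⟪q, T q⟫ with hc
  have ha0 : 0 ≤ a := le_trans (by positivity) (hspec g).1
  have hb0 : 0 ≤ b := by positivity
  have hgTq : ⟪g, T q⟫ = b := by
    rw [← hsym, ← hq, real_inner_self_eq_norm_sq]
  have hcμ : μ * b ≤ c := (hspec q).1
  have hcM : c ≤ M * b := (hspec q).2
  have hquad : 0 ≤ c ^ 2 * a - c * b ^ 2 := by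
    have h7 := (hspec (c • g - b • q)).1
    have h8 : ⟪c • g - b • q, T (c • g - b • q)⟫ = c ^ 2 * a - c * b ^ 2 := by
      rw [map_sub, map_smul, map_smul]
      rw [inner_sub_left, inner_sub_right, inner_sub_right]
      simp only [real_inner_smul_left, real_inner_smul_right]
      rw [← hq, ← ha, hgTq, real_inner_self_eq_norm_sq, ← hb, ← hc]
      ring
    have h10 : 0 ≤ μ * ‖c • g - b • q‖ ^ 2 := by positivity
    linarith [h8 ▸ h7]
  have hkey : b ≤ M * a := by
    rcases eq_or_lt_of_le hb0 with hb1 | hb1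
    · rw [← hb1]; positivity
    · have hcpos : 0 < c := lt_of_lt_of_le (by positivity) hcμ
      have h12 : c * b ^ 2 ≤ c * (c * a) := by
        have h : c ^ 2 * a = c * (c * a) := by ring
        linarith
      have h13 : b ^ 2 ≤ c * a := (mul_le_mul_iff_right₀ hcpos).mp h12
      have h14 : c * a ≤ M * b * a := mul_le_mul_of_nonneg_right hcM ha0
      have h15 : b * b ≤ b * (M * a) := by
        have h : b ^ 2 = b * b := sq b
        have h' : M * b * a = b * (M * a) := by ring
        linarith
      exact le_of_mul_le_mul_left h15 hb1
  -- descent lemma applied with v = η • (pR + pD)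
  have hdesc := descent_lemma 𝓛 L hdiff hlip θ (η • (pR + pD))
  have hpq : pR + pD = -q := hsum
  have hnorm : ‖pR + pD‖ ^ 2 = b := by rw [hpq, norm_neg]
  have hinner : ⟪g, η • (pR + pD)⟫ = -(η * a) := by
    rw [real_inner_smul_right, hpq, inner_neg_right, ← ha]; ring
  have hnv : ‖η • (pR + pD)‖ ^ 2 = η ^ 2 * b := by
    rw [norm_smul, mul_pow, Real.norm_eq_abs, sq_abs, hnorm]
  rw [hinner, hnv] at hdesc
  -- rewrite the right-hand side
  have hRn : ‖pR‖ ≠ 0 := norm_ne_zero_iff.2 hpR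
  have hDn : ‖pD‖ ≠ 0 := norm_ne_zero_iff.2 hpD
  have hrhs : ‖pR‖ ^ 2 + ‖pD‖ ^ 2 + 2 * ‖pR‖ * ‖pD‖ * (⟪pR, pD⟫ / (‖pR‖ * ‖pD‖)) = b := by
    have : 2 * ‖pR‖ * ‖pD‖ * (⟪pR, pD⟫ / (‖pR‖ * ‖pD‖)) = 2 * ⟪pR, pD⟫ := by
      field_simp
    rw [this, ← hnorm, norm_add_sq_real]
    ring
  rw [hrhs]
  -- final arithmetic
  have hstep : η * a - L / 2 * (η ^ 2 * b) ≥ (η / M - L * η ^ 2 / 2) * b := by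
    have h11 : η / M * b ≤ η * a := by
      rw [div_mul_eq_mul_div, div_le_iff₀ hM]
      calc η * b ≤ η * (M * a) := mul_le_mul_of_nonneg_left hkey hη.le
        _ = η * a * M := by ring
    have h16 : (η / M - L * η ^ 2 / 2) * b = η / M * b - L / 2 * (η ^ 2 * b) := by ring
    linarith
  linarith
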